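/- Let 𝒮 ⊆ X × Y be the set of pairs (x*,y*) with 0 ∈ ∇f(x*) + ∂g(x*) + M*y* and 0 ∈ -Mx* + ∂h*(y*), and let 𝑺 ⊆ X × 𝒀 be the set of pairs (x*,𝒚*) with 0 ∈ ∇f(x*) + ∂g(x*) + K*𝒚* and 0 ∈ -Kx* + ∂h̄*(𝒚*), where h̄ = h∘(D(m)S) and M = D(m)SK. Let G : X × Y → X × 𝒀 map (x,y) to (x, 𝒚) with 𝒚^{(j)}(i) = y^{(j)} for all i ∈ I(j). Then 𝑺 = G(𝒮). -/

import Mathlib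

/-- Fenchel conjugate of an extended-real-valued function with respect to a given
real pairing: `F*(φ) = sup_y ⟨φ, y⟩ - F(y)`. -/
noncomputable def conjP {E : Type*} (pair : E → E → ℝ) (F : E → EReal) (φ : E) : EReal :=
  ⨆ y, ((pair φ y : ℝ) : EReal) - F y

/-- Subdifferential of an extended-real-valued function with respect to a given real
pairing: `u ∈ ∂F(x)` iff `F(ψ) ≥ F(x) + ⟨u, ψ - x⟩` for all `ψ`. -/
def subdiffP {E : Type*} [AddCommGroup E] (pair : E → E → ℝ) (F : E → EReal) (x : E) :
    Set E :=
  {u | ∀ ψ, F x + ((pair u (ψ - x) : ℝ) : EReal) ≤ F ψ}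

theorem affine_minorant {E : Type*} [NormedAddCommGroup E] [NormedSpace ℝ E]
    (h : E → EReal) (hproper : ∃ y, h y ≠ ⊤) (hnebot : ∀ y, h y ≠ ⊥)
    (hconv : ∀ (y z : E) (t : ℝ), 0 ≤ t → t ≤ 1 →
      h (t • y + (1 - t) • z) ≤ ((t : ℝ) : EReal) * h y + (((1 - t : ℝ)) : EReal) * h z)
    (hlsc : LowerSemicontinuous h) :
    ∃ (φ : E →L[ℝ] ℝ) (b : ℝ), ∀ y, ((φ y + b : ℝ) : EReal) ≤ h y := by
  classical
  set S : Set (E × ℝ) := {q : E × ℝ | h q.1 ≤ (q.2 : EReal)} with hS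
  have hSconv : Convex ℝ S := by
    intro q hq r hr a b ha hb hab
    have hb' : b = 1 - a := by linarith
    subst hb'
    have hmain := hconv q.1 r.1 a ha (by linarith)
    have h1 : ((a : ℝ) : EReal) * h q.1 ≤ ((a : ℝ) : EReal) * ((q.2 : ℝ) : EReal) :=
      mul_le_mul_of_nonneg_left hq (by exact_mod_cast ha)
    have h2 : (((1 - a : ℝ)) : EReal) * h r.1 ≤ (((1 - a : ℝ)) : EReal) * ((r.2 : ℝ) : EReal) :=
      mul_le_mul_of_nonneg_left hr (by exact_mod_cast (by linarith : (0:ℝ) ≤ 1 - a))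
    show h (a • q.1 + (1 - a) • r.1) ≤ (((a • q + (1 - a) • r).2 : ℝ) : EReal)
    calc h (a • q.1 + (1 - a) • r.1)
        ≤ ((a : ℝ) : EReal) * h q.1 + (((1 - a : ℝ)) : EReal) * h r.1 := hmain
      _ ≤ ((a : ℝ) : EReal) * ((q.2 : ℝ) : EReal) + (((1 - a : ℝ)) : EReal) * ((r.2 : ℝ) : EReal) :=
        add_le_add h1 h2
      _ = (((a * q.2 + (1 - a) * r.2 : ℝ)) : EReal) := by
        rw [← EReal.coe_mul, ← EReal.coe_mul, ← EReal.coe_add]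
      _ = (((a • q + (1 - a) • r).2 : ℝ) : EReal) := rfl
  have hSclosed : IsClosed S := by
    rw [← isOpen_compl_iff, isOpen_iff_mem_nhds]
    intro q hq
    simp only [Set.mem_compl_iff, hS, Set.mem_setOf_eq, not_le] at hq
    obtain ⟨r, hr1, hr2⟩ := EReal.exists_between_coe_real hq
    have h1 : {z : E | (r : EReal) < h z} ∈ nhds q.1 := hlsc q.1 r hr2
    have h2 : Set.Iio r ∈ nhds q.2 := Iio_mem_nhds (by exact_mod_cast hr1)
    rw [nhds_prod_eq]
    refine Filter.mem_of_superset (Filter.prod_mem_prod h1 h2) ?_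
    rintro ⟨z, s⟩ ⟨hz, hs⟩
    simp only [Set.mem_compl_iff, hS, Set.mem_setOf_eq, not_le]
    exact lt_trans (by exact_mod_cast hs) hz
  obtain ⟨y₀, hy₀⟩ := hproper
  obtain ⟨r₀, hr₀⟩ : ∃ r₀ : ℝ, h y₀ = (r₀ : EReal) := ⟨(h y₀).toReal,
    (EReal.coe_toReal hy₀ (hnebot y₀)).symm⟩
  have hx₀ : (y₀, r₀ - 1) ∉ S := by
    simp only [hS, Set.mem_setOf_eq, hr₀, not_le]
    exact_mod_cast (by linarith : r₀ - 1 < r₀)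
  obtain ⟨f, u, hfu, hux⟩ := geometric_hahn_banach_closed_point hSconv hSclosed hx₀
  set c : ℝ := f (0, 1) with hc
  have hf_split : ∀ (y : E) (t : ℝ), f (y, t) = f (y, 0) + t * c := by
    intro y t
    have hyt : (y, t) = (y, (0:ℝ)) + t • ((0:E), (1:ℝ)) := by
      simp [Prod.ext_iff]
    rw [hyt, map_add, map_smul]
    simp [hc, smul_eq_mul]
  have key : ∀ t : ℝ, r₀ ≤ t → f (y₀, 0) + t * c < u := by
    intro t ht
    have : (y₀, t) ∈ S := by
      simp only [hS, Set.mem_setOf_eq, hr₀]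
      exact_mod_cast ht
    have := hfu _ this
    rwa [hf_split] at this
  have hcneg : c < 0 := by
    rcases lt_trichotomy c 0 with hlt | heq | hgt
    · exact hlt
    · exfalso
      have h1 := key r₀ le_rfl
      have h2 := hux
      rw [hf_split] at h2
      rw [heq] at h1 h2
      linarith
    · exfalso
      set t := max r₀ ((u - f (y₀, 0)) / c) with htdef
      have h1 := key t (le_max_left _ _)
      have h2 : (u - f (y₀, 0)) / c ≤ t := le_max_right _ _
      rw [div_le_iff₀ hgt] at h2
      linarith
  have hmin : ∀ y : E, (((u - f (y, 0)) / c : ℝ) : EReal) ≤ h y := by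
    intro y
    rcases eq_or_ne (h y) ⊤ with htop | hne
    · rw [htop]; exact le_top
    · obtain ⟨t, ht⟩ : ∃ t : ℝ, h y = (t : EReal) := ⟨(h y).toReal,
        (EReal.coe_toReal hne (hnebot y)).symm⟩
      have : (y, t) ∈ S := by simp only [hS, Set.mem_setOf_eq, ht]; exact le_refl _
      have h1 := hfu _ this
      rw [hf_split] at h1
      have h2 : (u - f (y, 0)) / c < t := by
        rw [div_lt_iff_of_neg hcneg]
        linarith
      rw [ht]
      exact_mod_cast le_of_lt h2
  refine ⟨(-(1/c)) • (f.comp (ContinuousLinearMap.inl ℝ E ℝ)), u / c, ?_⟩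
  intro y
  have heq : ((-(1/c)) • (f.comp (ContinuousLinearMap.inl ℝ E ℝ))) y + u / c
      = (u - f (y, 0)) / c := by
    simp only [ContinuousLinearMap.smul_apply, ContinuousLinearMap.comp_apply,
      ContinuousLinearMap.inl_apply, smul_eq_mul]
    field_simp
    congr 1
    ring
  rw [heq]
  exact hmin y


theorem riesz_pi {p : ℕ} (Ys : Fin p → Type)
    [∀ j, NormedAddCommGroup (Ys j)] [∀ j, InnerProductSpace ℝ (Ys j)]
    [∀ j, FiniteDimensional ℝ (Ys j)]
    (φ : (∀ j, Ys j) →L[ℝ] ℝ) :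
    ∃ w : ∀ j, Ys j, ∀ y, φ y = ∑ j, @inner ℝ _ _ (w j) (y j) := by
  classical
  haveI : ∀ j, CompleteSpace (Ys j) := fun j => FiniteDimensional.complete ℝ _
  set ℓ : ∀ j, Ys j →L[ℝ] ℝ := fun j =>
    φ.comp (LinearMap.toContinuousLinearMap (LinearMap.single ℝ Ys j)) with hℓ
  refine ⟨fun j => (InnerProductSpace.toDual ℝ (Ys j)).symm (ℓ j), fun y => ?_⟩
  have hy : y = ∑ j, Pi.single j (y j) := (Finset.univ_sum_single y).symm
  calc φ y = φ (∑ j, Pi.single j (y j)) := by rw [← hy]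
    _ = ∑ j, φ (Pi.single j (y j)) := map_sum φ _ _
    _ = ∑ j, @inner ℝ _ _ ((InnerProductSpace.toDual ℝ (Ys j)).symm (ℓ j)) (y j) := by
        refine Finset.sum_congr rfl fun j _ => ?_
        rw [InnerProductSpace.toDual_symm_apply]
        simp [hℓ]

theorem conj_lift {n p : ℕ} {Ys : Fin p → Type}
    [∀ j, NormedAddCommGroup (Ys j)] [∀ j, InnerProductSpace ℝ (Ys j)]
    {I : Fin p → Finset (Fin n)} (hm : ∀ j, 1 ≤ (I j).card)
    (h : (∀ j, Ys j) → EReal)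
    (pairY : (∀ j, Ys j) → (∀ j, Ys j) → ℝ)
    (hpairY : ∀ y z, pairY y z = ∑ j, @inner ℝ _ _ (y j) (z j))
    (pairYY : (∀ j, {i // i ∈ I j} → Ys j) → (∀ j, {i // i ∈ I j} → Ys j) → ℝ)
    (hpairYY : ∀ u v, pairYY u v = ∑ j, ∑ i ∈ (I j).attach, @inner ℝ _ _ (u j i) (v j i))
    (hbar : (∀ j, {i // i ∈ I j} → Ys j) → EReal)
    (hbarT : ∀ yy, hbar yy = h (fun j => ∑ i ∈ (I j).attach, yy j i))
    (w : ∀ j, Ys j) :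
    conjP pairYY hbar (fun j _ => w j) = conjP pairY h w := by
  have hsurj : Function.Surjective (fun yy : (∀ j, {i // i ∈ I j} → Ys j) =>
      (fun j => ∑ i ∈ (I j).attach, yy j i : ∀ j, Ys j)) := by
    intro s
    refine ⟨fun j _ => ((I j).card : ℝ)⁻¹ • s j, ?_⟩
    funext j
    show ∑ _i ∈ (I j).attach, ((I j).card : ℝ)⁻¹ • s j = s j
    rw [Finset.sum_const, Finset.card_attach, ← Nat.cast_smul_eq_nsmul ℝ, smul_inv_smul₀]
    exact Nat.cast_ne_zero.2 (by have := hm j; omega)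
  unfold conjP
  rw [← hsurj.iSup_comp (g := fun s => ((pairY w s : ℝ) : EReal) - h s)]
  refine iSup_congr fun yy => ?_
  rw [hbarT]
  congr 2
  rw [hpairYY, hpairY]
  exact Finset.sum_congr rfl fun j _ => (inner_sum _ _ _).symm

theorem conj_noncon {n p : ℕ} {Ys : Fin p → Type}
    [∀ j, NormedAddCommGroup (Ys j)] [∀ j, InnerProductSpace ℝ (Ys j)]
    {I : Fin p → Finset (Fin n)} (hm : ∀ j, 1 ≤ (I j).card)
    (h : (∀ j, Ys j) → EReal) (hproper : ∃ y, h y ≠ ⊤) (hnebot : ∀ y, h y ≠ ⊥)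
    (pairYY : (∀ j, {i // i ∈ I j} → Ys j) → (∀ j, {i // i ∈ I j} → Ys j) → ℝ)
    (hpairYY : ∀ u v, pairYY u v = ∑ j, ∑ i ∈ (I j).attach, @inner ℝ _ _ (u j i) (v j i))
    (hbar : (∀ j, {i // i ∈ I j} → Ys j) → EReal)
    (hbarT : ∀ yy, hbar yy = h (fun j => ∑ i ∈ (I j).attach, yy j i))
    (φ : ∀ j, {i // i ∈ I j} → Ys j) (j₀ : Fin p)
    (i₁ i₂ : {i // i ∈ I j₀}) (hne : φ j₀ i₁ ≠ φ j₀ i₂) :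
    conjP pairYY hbar φ = ⊤ := by
  classical
  obtain ⟨s₀, hs₀⟩ := hproper
  obtain ⟨ρ, hρ⟩ : ∃ ρ : ℝ, h s₀ = (ρ : EReal) :=
    ⟨_, (EReal.coe_toReal hs₀ (hnebot s₀)).symm⟩
  set d := φ j₀ i₁ - φ j₀ i₂ with hd
  have hd0 : d ≠ 0 := sub_ne_zero.2 hne
  set e₀ : {i // i ∈ I j₀} → Ys j₀ :=
    fun i => (if i = i₁ then d else 0) - (if i = i₂ then d else 0) with he₀
  set e : ∀ j, {i // i ∈ I j} → Ys j :=
    Pi.single (M := fun j => {i // i ∈ I j} → Ys j) j₀ e₀ with he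
  have hTe : ∀ j, ∑ i ∈ (I j).attach, e j i = 0 := by
    intro j
    rcases eq_or_ne j j₀ with rfl | hj
    · rw [he, Pi.single_eq_same, he₀]
      rw [Finset.sum_sub_distrib, Finset.sum_ite_eq' _ i₁ (fun _ => d),
        Finset.sum_ite_eq' _ i₂ (fun _ => d)]
      simp [Finset.mem_attach]
    · rw [he, Pi.single_eq_of_ne hj]
      simp
  have hpairφe : pairYY φ e = @inner ℝ _ _ d d := by
    rw [hpairYY]
    rw [Finset.sum_eq_single_of_mem j₀ (Finset.mem_univ _)]
    · rw [he, Pi.single_eq_same, he₀]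
      have : ∀ i ∈ (I j₀).attach, @inner ℝ _ _ (φ j₀ i)
          ((if i = i₁ then d else 0) - (if i = i₂ then d else 0))
          = (if i = i₁ then @inner ℝ _ _ (φ j₀ i) d else 0)
            - (if i = i₂ then @inner ℝ _ _ (φ j₀ i) d else 0) := by
        intro i _
        rw [inner_sub_right]
        congr 1 <;> split <;> simp
      rw [Finset.sum_congr rfl this, Finset.sum_sub_distrib,
        Finset.sum_ite_eq' _ i₁ (fun i => @inner ℝ _ _ (φ j₀ i) d),
        Finset.sum_ite_eq' _ i₂ (fun i => @inner ℝ _ _ (φ j₀ i) d)]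
      simp only [Finset.mem_attach, if_true]
      rw [← inner_sub_left]
    · intro j _ hj
      rw [he, Pi.single_eq_of_ne hj]
      simp
  set Q : ℝ := @inner ℝ _ _ d d with hQdef
  have hQpos : 0 < Q := lt_of_le_of_ne real_inner_self_nonneg (fun hEq => hd0 (inner_self_eq_zero.mp hEq.symm))
  unfold conjP
  rw [iSup_eq_top]
  intro b hb
  obtain ⟨r, hbr, -⟩ := EReal.exists_between_coe_real hb
  set σ : ∀ j, {i // i ∈ I j} → Ys j := fun j _ => ((I j).card : ℝ)⁻¹ • s₀ j with hσ
  set t : ℝ := (r + ρ - pairYY φ σ) / Q with ht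
  refine ⟨σ + t • e, ?_⟩
  have hT : (fun j => ∑ i ∈ (I j).attach, (σ + t • e) j i) = s₀ := by
    funext j
    show ∑ i ∈ (I j).attach, (σ j i + (t • e) j i) = s₀ j
    rw [Finset.sum_add_distrib]
    have h1 : ∑ i ∈ (I j).attach, σ j i = s₀ j := by
      show ∑ _i ∈ (I j).attach, ((I j).card : ℝ)⁻¹ • s₀ j = s₀ j
      rw [Finset.sum_const, Finset.card_attach, ← Nat.cast_smul_eq_nsmul ℝ, smul_inv_smul₀]
      exact Nat.cast_ne_zero.2 (by have := hm j; omega)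
    have h2 : ∑ i ∈ (I j).attach, (t • e) j i = 0 := by
      show ∑ i ∈ (I j).attach, t • e j i = 0
      rw [← Finset.smul_sum, hTe, smul_zero]
    rw [h1, h2, add_zero]
  have hpairlin : pairYY φ (σ + t • e) = pairYY φ σ + t * pairYY φ e := by
    simp only [hpairYY, Pi.add_apply, Pi.smul_apply, inner_add_right, inner_smul_right,
      Finset.sum_add_distrib, Finset.mul_sum, smul_eq_mul]
  have hval : pairYY φ (σ + t • e) - ρ = r := by
    rw [hpairlin, hpairφe, ht, div_mul_cancel₀ _ (ne_of_gt hQpos)]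
    ring
  calc b < (r : EReal) := hbr
    _ = ((pairYY φ (σ + t • e) : ℝ) : EReal) - hbar (σ + t • e) := by
        rw [hbarT, hT, hρ, ← EReal.coe_sub, hval]

/-- (Lemma 6 of the paper.) Let `𝒮` be the set of primal-dual solutions of
`min f + g + h(M·)` and `𝑺` the set of primal-dual solutions of `min f + g + h̄(K·)`
where `h̄ = h ∘ (D(m)S)` and `M = D(m)SK`. With `G(x,y) = (x, 𝒚)`, `𝒚^{(j)}(i) = y^{(j)}`,
one has `𝑺 = G(𝒮)`. -/
theorem stmt9 {n p : ℕ}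
    (Xs : Fin n → Type) (Ys : Fin p → Type)
    [∀ i, NormedAddCommGroup (Xs i)] [∀ i, InnerProductSpace ℝ (Xs i)]
    [∀ i, FiniteDimensional ℝ (Xs i)]
    [∀ j, NormedAddCommGroup (Ys j)] [∀ j, InnerProductSpace ℝ (Ys j)]
    [∀ j, FiniteDimensional ℝ (Ys j)]
    (Mb : ∀ j i, Xs i →L[ℝ] Ys j)
    (I : Fin p → Finset (Fin n)) (hI : ∀ j i, i ∈ I j ↔ Mb j i ≠ 0)
    (hm : ∀ j, 1 ≤ (I j).card)
    -- f convex differentiable with gradient gradf: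
    (f : (∀ i, Xs i) → ℝ) (gradf : (∀ i, Xs i) → ∀ i, Xs i)
    (hf : ∀ x u, f x + ∑ i, @inner ℝ _ _ (gradf x i) (u i - x i) ≤ f u)
    -- g proper (here extended-real-valued):
    (g : (∀ i, Xs i) → EReal)
    -- h proper closed convex:
    (h : (∀ j, Ys j) → EReal)
    (hproper : ∃ y, h y ≠ ⊤) (hnebot : ∀ y, h y ≠ ⊥)
    (hconv : ∀ (y z : ∀ j, Ys j) (t : ℝ), 0 ≤ t → t ≤ 1 →
      h (t • y + (1 - t) • z) ≤ ((t : ℝ) : EReal) * h y + (((1 - t : ℝ)) : EReal) * h z)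
    (hlsc : LowerSemicontinuous h)
    -- the pairings on X, Y and 𝒀, and h̄ = h ∘ (D(m)S):
    (pairX : (∀ i, Xs i) → (∀ i, Xs i) → ℝ)
    (hpairX : ∀ x z, pairX x z = ∑ i, @inner ℝ _ _ (x i) (z i))
    (pairY : (∀ j, Ys j) → (∀ j, Ys j) → ℝ)
    (hpairY : ∀ y z, pairY y z = ∑ j, @inner ℝ _ _ (y j) (z j))
    (pairYY : (∀ j, {i // i ∈ I j} → Ys j) → (∀ j, {i // i ∈ I j} → Ys j) → ℝ)
    (hpairYY : ∀ u v, pairYY u v = ∑ j, ∑ i ∈ (I j).attach, @inner ℝ _ _ (u j i) (v j i))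
    (hbar : (∀ j, {i // i ∈ I j} → Ys j) → EReal)
    (hhbar : ∀ yy, hbar yy = h (fun j =>
      ((I j).card : ℝ) • (((I j).card : ℝ)⁻¹ • ∑ i ∈ (I j).attach, yy j i)))
    -- the two saddle-point sets and the map G:
    (Sset : Set ((∀ i, Xs i) × (∀ j, Ys j)))
    (hSset : Sset = {z | (fun i => -(gradf z.1 i)
          - ∑ j, ContinuousLinearMap.adjoint (Mb j i) (z.2 j)) ∈ subdiffP pairX g z.1
        ∧ (fun j => ∑ i, Mb j i (z.1 i)) ∈ subdiffP pairY (conjP pairY h) z.2})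
    (BSset : Set ((∀ i, Xs i) × (∀ j, {i // i ∈ I j} → Ys j)))
    (hBSset : BSset = {z | (fun i => -(gradf z.1 i)
          - ∑ j, if hij : i ∈ I j
              then ContinuousLinearMap.adjoint (Mb j i) (z.2 j ⟨i, hij⟩) else 0)
            ∈ subdiffP pairX g z.1
        ∧ (fun j (i : {i // i ∈ I j}) => Mb j i.1 (z.1 i.1))
            ∈ subdiffP pairYY (conjP pairYY hbar) z.2})
    (G : (∀ i, Xs i) × (∀ j, Ys j) → (∀ i, Xs i) × (∀ j, {i // i ∈ I j} → Ys j))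
    (hG : ∀ z, G z = (z.1, fun j _ => z.2 j)) :
    BSset = G '' Sset := by
  classical
  -- h̄ = h ∘ T
  have hbarT : ∀ yy, hbar yy = h (fun j => ∑ i ∈ (I j).attach, yy j i) := by
    intro yy
    rw [hhbar]
    congr 1
    funext j
    rw [smul_inv_smul₀]
    exact Nat.cast_ne_zero.2 (by have := hm j; omega)
  -- a nonempty element of each attach
  have hattne : ∀ j, (I j).attach.Nonempty := fun j =>
    Finset.attach_nonempty_iff.2 (Finset.card_pos.mp (hm j))
  set i₀ : ∀ j, {i // i ∈ I j} := fun j => (hattne j).choose with hi₀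
  -- properness of h*
  obtain ⟨φ₀, b₀, hφ₀⟩ := affine_minorant h hproper hnebot hconv hlsc
  obtain ⟨w₀, hw₀⟩ := riesz_pi Ys φ₀
  have hconjw₀ : conjP pairY h w₀ ≠ ⊤ := by
    have hle : conjP pairY h w₀ ≤ ((-b₀ : ℝ) : EReal) := by
      refine iSup_le fun y => ?_
      have h1 : ((pairY w₀ y : ℝ) : EReal) - h y
          ≤ ((pairY w₀ y : ℝ) : EReal) - ((φ₀ y + b₀ : ℝ) : EReal) :=
        EReal.sub_le_sub le_rfl (hφ₀ y)
      rw [← EReal.coe_sub] at h1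
      have h2 : pairY w₀ y - (φ₀ y + b₀) = -b₀ := by
        rw [hpairY, hw₀]; ring
      rwa [h2] at h1
    exact fun hEq => absurd (hEq ▸ hle) (not_le.2 (EReal.coe_lt_top _))
  -- K x paired against a lifted vector
  have hKL : ∀ (x : ∀ i, Xs i) (v : ∀ j, Ys j),
      pairYY (fun j (i : {i // i ∈ I j}) => Mb j i.1 (x i.1)) (fun j _ => v j)
        = pairY (fun j => ∑ i, Mb j i (x i)) v := by
    intro x v
    rw [hpairYY, hpairY]
    refine Finset.sum_congr rfl fun j _ => ?_
    rw [sum_inner]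
    have h1 : ∑ i ∈ (I j).attach, @inner ℝ _ _ (Mb j i.1 (x i.1)) (v j)
        = ∑ i ∈ I j, @inner ℝ _ _ (Mb j i (x i)) (v j) :=
      Finset.sum_attach (I j) (fun i => @inner ℝ _ _ (Mb j i (x i)) (v j))
    rw [h1]
    exact Finset.sum_subset (Finset.subset_univ _) (fun i _ hi => by
      have h0 : Mb j i = 0 := not_ne_iff.1 (fun hne => hi ((hI j i).2 hne))
      simp [h0])
  -- adjoint sums agree on lifted vectors
  have hadj : ∀ (y : ∀ j, Ys j) (i : Fin n),
      (∑ j, if hij : i ∈ I j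
        then ContinuousLinearMap.adjoint (Mb j i) ((fun j (_ : {i // i ∈ I j}) => y j) j ⟨i, hij⟩)
        else 0)
      = ∑ j, ContinuousLinearMap.adjoint (Mb j i) (y j) := by
    intro y i
    refine Finset.sum_congr rfl fun j _ => ?_
    by_cases hij : i ∈ I j
    · rw [dif_pos hij]
    · rw [dif_neg hij]
      have h0 : Mb j i = 0 := not_ne_iff.1 (fun hne => hij ((hI j i).2 hne))
      simp [h0]
  -- lifted subtraction
  have hLsub : ∀ (v y : ∀ j, Ys j),
      (fun j (_ : {i // i ∈ I j}) => v j) - (fun j (_ : {i // i ∈ I j}) => y j)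
        = fun j (_ : {i // i ∈ I j}) => (v - y) j := fun v y => rfl
  ext z
  obtain ⟨x, yy⟩ := z
  constructor
  · intro hz
    rw [hBSset] at hz
    obtain ⟨hz1, hz2⟩ := hz
    -- yy is constant on each block
    have hconst : ∀ j i, yy j i = yy j (i₀ j) := by
      by_contra hcon
      push_neg at hcon
      obtain ⟨j, i, hnei⟩ := hcon
      have htop : conjP pairYY hbar yy = ⊤ :=
        conj_noncon hm h hproper hnebot pairYY hpairYY hbar hbarT yy j i (i₀ j) hnei
      have := hz2 (fun j _ => w₀ j)
      rw [htop, conj_lift hm h pairY hpairY pairYY hpairYY hbar hbarT w₀,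
        EReal.top_add_coe] at this
      exact hconjw₀ (top_le_iff.1 this)
    set y : ∀ j, Ys j := fun j => yy j (i₀ j) with hy
    have hyyL : yy = fun j (_ : {i // i ∈ I j}) => y j := by
      funext j i
      exact hconst j i
    refine ⟨(x, y), ?_, ?_⟩
    · rw [hSset]
      constructor
      · show (fun i => -(gradf x i) - ∑ j, ContinuousLinearMap.adjoint (Mb j i) (y j))
          ∈ subdiffP pairX g x
        have := hz1
        rw [hyyL] at this
        convert this using 2 with i
        rw [hadj y i]
      · show (fun j => ∑ i, Mb j i (x i)) ∈ subdiffP pairY (conjP pairY h) y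
        intro v
        have h2 := hz2 (fun j (_ : {i // i ∈ I j}) => v j)
        rw [hyyL] at h2
        rw [hLsub, hKL x (v - y), conj_lift hm h pairY hpairY pairYY hpairYY hbar hbarT,
          conj_lift hm h pairY hpairY pairYY hpairYY hbar hbarT] at h2
        exact h2
    · rw [hG]
      show ((x, y).1, fun j _ => (x, y).2 j) = (x, yy)
      rw [hyyL]
  · rintro ⟨⟨x', y'⟩, hmem, hGz⟩
    rw [hG] at hGz
    injection hGz with hx hyy
    subst hx
    subst hyy
    rw [hSset] at hmem
    obtain ⟨h1, h2⟩ := hmem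
    rw [hBSset]
    constructor
    · show (fun i => -(gradf x' i) - ∑ j, if hij : i ∈ I j
          then ContinuousLinearMap.adjoint (Mb j i)
            ((fun j (_ : {i // i ∈ I j}) => y' j) j ⟨i, hij⟩) else 0)
        ∈ subdiffP pairX g x'
      convert h1 using 2 with i
      rw [hadj y' i]
    · show (fun j (i : {i // i ∈ I j}) => Mb j i.1 (x' i.1))
        ∈ subdiffP pairYY (conjP pairYY hbar) (fun j _ => y' j)
      intro ψ
      by_cases hcst : ∀ j i, ψ j i = ψ j (i₀ j)
      · have hψL : ψ = fun j (_ : {i // i ∈ I j}) => ψ j (i₀ j) := by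
          funext j i; exact hcst j i
        rw [hψL, hLsub, hKL x', conj_lift hm h pairY hpairY pairYY hpairYY hbar hbarT,
          conj_lift hm h pairY hpairY pairYY hpairYY hbar hbarT]
        exact h2 (fun j => ψ j (i₀ j))
      · push_neg at hcst
        obtain ⟨j, i, hnei⟩ := hcst
        have htop : conjP pairYY hbar ψ = ⊤ :=
          conj_noncon hm h hproper hnebot pairYY hpairYY hbar hbarT ψ j i (i₀ j) hnei
        rw [htop]
        exact le_top
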